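/- arXiv:1701.03207 — 3 statements merged into one kernel-verified Lean document; each statement's English description precedes it below -/
import Mathlib

section
/- Suppose v ∈ ℝ³ and there exists an auxiliary random variable U such that I(X,Y;U) ≤ v_{XY}, H(X|U) ≤ H(X) − v_X, H(Y|U) ≤ H(Y) − v_Y, H(X|Y,U) ≤ H(X|Y) − v_{XY} + v_Y, and H(Y|X,U) ≤ H(Y|X) − v_{XY} + v_X. Then necessarily v_X = I(X;U), v_Y = I(Y;U) and v_{XY} = I(X,Y;U); in particular v ∈ 𝓘_{XY}. -/
open scoped BigOperators Pointwise Classical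

noncomputable section

namespace GW

/-- A probability mass function on a finite type. -/
def IsPMF {α : Type} [Fintype α] (p : α → ℝ) : Prop :=
  (∀ a, 0 ≤ p a) ∧ ∑ a, p a = 1

/-- Distribution (pmf) of the random variable `f` under the pmf `p`. -/
def dist {α β : Type} [Fintype α] (p : α → ℝ) (f : α → β) : β → ℝ :=
  fun b => ∑ a, if f a = b then p a else 0

/-- Shannon entropy (base 2) of the random variable `f` under the pmf `p`. -/
def H {α β : Type} [Fintype α] [Fintype β] (p : α → ℝ) (f : α → β) : ℝ :=
  ∑ b, -(dist p f b * Real.logb 2 (dist p f b))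

/-- Mutual information `I(f; g)` under `p`. -/
def I2 {α β γ : Type} [Fintype α] [Fintype β] [Fintype γ]
    (p : α → ℝ) (f : α → β) (g : α → γ) : ℝ :=
  H p f + H p g - H p (fun a => (f a, g a))

/-- Conditional entropy `H(f | g)` under `p`. -/
def Hc {α β γ : Type} [Fintype α] [Fintype β] [Fintype γ]
    (p : α → ℝ) (f : α → β) (g : α → γ) : ℝ :=
  H p (fun a => (f a, g a)) - H p g

/-- Conditional mutual information `I(f; g | h)` under `p`. -/
def Ic {α β γ δ : Type} [Fintype α] [Fintype β] [Fintype γ] [Fintype δ]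
    (p : α → ℝ) (f : α → β) (g : α → γ) (h : α → δ) : ℝ :=
  Hc p f h + Hc p g h - Hc p (fun a => (f a, g a)) h

/-- Independence of the random variables `f` and `g` under `p`. -/
def Indep {α β γ : Type} [Fintype α] (p : α → ℝ) (f : α → β) (g : α → γ) : Prop :=
  ∀ b c, dist p (fun a => (f a, g a)) (b, c) = dist p f b * dist p g c

/-- `q` is a joint pmf on `X × Y × U` whose `(X,Y)`-marginal is `p`; i.e. `U` is an
auxiliary random variable defined jointly with `(X,Y)` via a conditional pmf `p_{U|XY}`. -/
def IsAux {X Y U : Type} [Fintype X] [Fintype Y] [Fintype U]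
    (p : X × Y → ℝ) (q : X × Y × U → ℝ) : Prop :=
  IsPMF q ∧ ∀ x y, (∑ u, q (x, y, u)) = p (x, y)

/-- Coordinate map onto `X`. -/
def cX {X Y U : Type} : X × Y × U → X := fun a => a.1
/-- Coordinate map onto `Y`. -/
def cY {X Y U : Type} : X × Y × U → Y := fun a => a.2.1
/-- Coordinate map onto `U`. -/
def cU {X Y U : Type} : X × Y × U → U := fun a => a.2.2
/-- Coordinate map onto `X × Y`. -/
def cXY {X Y U : Type} : X × Y × U → X × Y := fun a => (a.1, a.2.1)

/-- The mutual information region `𝓘_{XY}`. -/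
def MIRegion {X Y : Type} [Fintype X] [Fintype Y] (p : X × Y → ℝ) : Set (ℝ × ℝ × ℝ) :=
  { v | ∃ (U : Type) (_ : Fintype U) (q : X × Y × U → ℝ), IsAux p q ∧
      v = (I2 q cX cU, I2 q cY cU, I2 q cXY cU) }

/-- The outer region `𝓘ᵒ_{XY}`. -/
def OuterRegion {X Y : Type} [Fintype X] [Fintype Y] (p : X × Y → ℝ) : Set (ℝ × ℝ × ℝ) :=
  { v | 0 ≤ v.1 ∧ 0 ≤ v.2.1 ∧ v.1 + v.2.1 - v.2.2 ≤ I2 p Prod.fst Prod.snd ∧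
        0 ≤ v.2.2 - v.2.1 ∧ v.2.2 - v.2.1 ≤ Hc p Prod.fst Prod.snd ∧
        0 ≤ v.2.2 - v.1 ∧ v.2.2 - v.1 ≤ Hc p Prod.snd Prod.fst }

/-- Maximal interaction information `G_NNI(X; Y)`. -/
def GNNI {X Y : Type} [Fintype X] [Fintype Y] (p : X × Y → ℝ) : ℝ :=
  sSup { r | ∃ (U : Type) (_ : Fintype U) (q : X × Y × U → ℝ), IsAux p q ∧
      r = Ic q cX cY cU - I2 p Prod.fst Prod.snd }

/-- Asymmetric private interaction information `G_PNI(X → Y)`. -/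
def GPNI {X Y : Type} [Fintype X] [Fintype Y] (p : X × Y → ℝ) : ℝ :=
  sSup { r | ∃ (U : Type) (_ : Fintype U) (q : X × Y × U → ℝ), IsAux p q ∧
      Indep q cU cX ∧ r = Ic q cX cY cU - I2 p Prod.fst Prod.snd }

/-- Symmetric private interaction information `G_PPI(X; Y)`. -/
def GPPI {X Y : Type} [Fintype X] [Fintype Y] (p : X × Y → ℝ) : ℝ :=
  sSup { r | ∃ (U : Type) (_ : Fintype U) (q : X × Y × U → ℝ), IsAux p q ∧
      Indep q cU cX ∧ Indep q cU cY ∧ r = Ic q cX cY cU - I2 p Prod.fst Prod.snd }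



lemma H_congr {α α' β : Type} [Fintype α] [Fintype α'] [Fintype β]
    (p : α → ℝ) (p' : α' → ℝ) (f : α → β) (g : α' → β)
    (h : ∀ b, dist p f b = dist p' g b) : H p f = H p' g := by
  unfold H; simp_rw [h]

lemma H_comp_inj {α β γ : Type} [Fintype α] [Fintype β] [Fintype γ]
    (p : α → ℝ) (f : α → β) (e : β → γ) (he : Function.Injective e) :
    H p (fun a => e (f a)) = H p f := by
  unfold H
  have h0 : ∀ c ∈ (Finset.univ : Finset γ), c ∉ Finset.univ.image e →
      -(dist p (fun a => e (f a)) c * Real.logb 2 (dist p (fun a => e (f a)) c)) = 0 := by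
    intro c _ hc
    have : dist p (fun a => e (f a)) c = 0 := by
      apply Finset.sum_eq_zero
      intro a _
      rw [if_neg]
      intro h; exact hc (Finset.mem_image.mpr ⟨f a, Finset.mem_univ _, h⟩)
    simp [this]
  rw [← Finset.sum_subset (Finset.subset_univ (Finset.univ.image e)) h0]
  rw [Finset.sum_image (fun b _ b' _ h => he h)]
  apply Finset.sum_congr rfl
  intro b _
  have hd : dist p (fun a => e (f a)) (e b) = dist p f b := by
    unfold dist
    apply Finset.sum_congr rfl
    intro a _
    simp [he.eq_iff]
  rw [hd]

/-- if an auxiliary `U` witnesses the five EGW rate inequalities for `v`, then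
`v = (I(X;U), I(Y;U), I(X,Y;U))`; in particular `v ∈ 𝓘_{XY}`. -/
theorem stmt0 {X Y : Type} [Fintype X] [Fintype Y] (p : X × Y → ℝ) (hp : IsPMF p)
    (v : ℝ × ℝ × ℝ) {U : Type} [Fintype U] (q : X × Y × U → ℝ) (hq : IsAux p q)
    (h0 : I2 q cXY cU ≤ v.2.2)
    (h1 : Hc q cX cU ≤ H p Prod.fst - v.1)
    (h2 : Hc q cY cU ≤ H p Prod.snd - v.2.1)
    (h3 : Hc q cX (fun a => (cY a, cU a)) ≤ Hc p Prod.fst Prod.snd - v.2.2 + v.2.1)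
    (h4 : Hc q cY (fun a => (cX a, cU a)) ≤ Hc p Prod.snd Prod.fst - v.2.2 + v.1) :
    v.1 = I2 q cX cU ∧ v.2.1 = I2 q cY cU ∧ v.2.2 = I2 q cXY cU ∧ v ∈ MIRegion p := by
  obtain ⟨v1, v2, v3⟩ := v
  -- marginal distribution facts
  have dX : ∀ x, dist q cX x = dist p Prod.fst x := by
    intro x
    unfold dist cX
    simp only [Fintype.sum_prod_type]
    apply Finset.sum_congr rfl
    intro x' _
    by_cases h : x' = x
    · subst h; simp [hq.2]
    · simp [h]
  have dY : ∀ y, dist q cY y = dist p Prod.snd y := by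
    intro y
    unfold dist cY
    simp only [Fintype.sum_prod_type]
    apply Finset.sum_congr rfl
    intro x' _
    apply Finset.sum_congr rfl
    intro y' _
    by_cases h : y' = y
    · subst h; simp [hq.2]
    · simp [h]
  have dXY : ∀ z, dist q cXY z = dist p (fun a => (Prod.fst a, Prod.snd a)) z := by
    rintro ⟨x, y⟩
    have hL : dist q cXY (x, y) = p (x, y) := by
      unfold dist cXY
      simp only [Fintype.sum_prod_type]
      refine Eq.trans (Finset.sum_eq_single x
        (fun x' _ hx => Finset.sum_eq_zero fun y' _ => Finset.sum_eq_zero fun u _ =>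
          if_neg (by simp [hx])) (by simp)) ?_
      refine Eq.trans (Finset.sum_eq_single y
        (fun y' _ hy => Finset.sum_eq_zero fun u _ => if_neg (by simp [hy])) (by simp)) ?_
      exact Eq.trans (Finset.sum_congr rfl fun u _ => if_pos rfl) (hq.2 x y)
    have hR : dist p (fun a => (Prod.fst a, Prod.snd a)) (x, y) = p (x, y) := by
      unfold dist
      refine Eq.trans (Finset.sum_eq_single (x, y)
        (fun z _ hz => if_neg (by simpa using hz)) (by simp)) (if_pos rfl)
    rw [hL, hR]
  -- entropy identities
  have e1 : H q cX = H p Prod.fst := H_congr _ _ _ _ dX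
  have e2 : H q cY = H p Prod.snd := H_congr _ _ _ _ dY
  have e3 : H q cXY = H p (fun a => (Prod.fst a, Prod.snd a)) := H_congr _ _ _ _ dXY
  have e4 : H q (fun a => (cXY a, cU a)) = H q (fun a => a) :=
    H_comp_inj q (fun a => a) (fun a => ((a.1, a.2.1), a.2.2))
      (by rintro ⟨x, y, u⟩ ⟨x', y', u'⟩ h; simp_all)
  have e5 : H q (fun a => (cX a, (cY a, cU a))) = H q (fun a => a) := rfl
  have e6 : H q (fun a => (cY a, (cX a, cU a))) = H q (fun a => a) :=
    H_comp_inj q (fun a => a) (fun a => (a.2.1, (a.1, a.2.2)))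
      (by rintro ⟨x, y, u⟩ ⟨x', y', u'⟩ h; simp_all)
  have e7 : H p (fun a => (Prod.snd a, Prod.fst a)) = H p (fun a => (Prod.fst a, Prod.snd a)) :=
    H_comp_inj p (fun a => (Prod.fst a, Prod.snd a)) Prod.swap Prod.swap_injective
  simp only [Hc, I2] at h0 h1 h2 h3 h4 ⊢
  refine ⟨by linarith, by linarith, by linarith, ?_⟩
  refine ⟨U, inferInstance, q, hq, ?_⟩
  simp only [Hc, I2, Prod.mk.injEq]
  exact ⟨by linarith, by linarith, by linarith⟩

end GW
end
end

section
/- The mutual information region 𝓘_{XY} is a convex subset of ℝ³: for any two auxiliary random variables U₀, U₁ and any λ ∈ [0,1], the point (1−λ)·(I(X;U₀), I(Y;U₀), I(X,Y;U₀)) + λ·(I(X;U₁), I(Y;U₁), I(X,Y;U₁)) lies in 𝓘_{XY}. -/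
open scoped BigOperators Pointwise Classical

noncomputable section

namespace GW

section MixAux

variable {α β : Type} [Fintype α] [Fintype β]

lemma dist_nonneg' (p : α → ℝ) (hp : ∀ a, 0 ≤ p a) (f : α → β) (b : β) :
    0 ≤ dist p f b :=
  Finset.sum_nonneg fun a _ => by by_cases h : f a = b <;> simp [h, hp a]

lemma sum_dist (p : α → ℝ) (f : α → β) : ∑ b, dist p f b = ∑ a, p a := by
  unfold dist
  rw [Finset.sum_comm]
  simp

lemma neg_mul_logb_scale (c x : ℝ) (hc : 0 ≤ c) (hx : 0 ≤ x) :
    -(c * x * Real.logb 2 (c * x))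
      = c * -(x * Real.logb 2 x) - Real.logb 2 c * (c * x) := by
  rcases eq_or_lt_of_le hc with h | h
  · simp [← h]
  rcases eq_or_lt_of_le hx with h' | h'
  · simp [← h']
  rw [Real.logb_mul h.ne' h'.ne']; ring

lemma sum_scaled (c : ℝ) (hc : 0 ≤ c) (d : β → ℝ) (hd : ∀ b, 0 ≤ d b)
    (hs : ∑ b, d b = 1) :
    ∑ b, -(c * d b * Real.logb 2 (c * d b))
      = c * (∑ b, -(d b * Real.logb 2 (d b))) - c * Real.logb 2 c := by
  have h : ∀ b ∈ Finset.univ, -(c * d b * Real.logb 2 (c * d b))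
      = c * -(d b * Real.logb 2 (d b)) - Real.logb 2 c * (c * d b) :=
    fun b _ => neg_mul_logb_scale c (d b) hc (hd b)
  rw [Finset.sum_congr rfl h, Finset.sum_sub_distrib, ← Finset.mul_sum, ← Finset.mul_sum,
    ← Finset.mul_sum, hs]
  ring

end MixAux

section Mix

variable {X Y U₀ U₁ β : Type} [Fintype X] [Fintype Y] [Fintype U₀] [Fintype U₁] [Fintype β]

/-- Time-sharing mixture pmf on `X × Y × (U₀ ⊕ U₁)`. -/
def mix (l : ℝ) (q₀ : X × Y × U₀ → ℝ) (q₁ : X × Y × U₁ → ℝ) :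
    X × Y × (U₀ ⊕ U₁) → ℝ :=
  fun a => Sum.elim (fun u => (1 - l) * q₀ (a.1, a.2.1, u))
    (fun u => l * q₁ (a.1, a.2.1, u)) a.2.2

lemma dist_mix (l : ℝ) (q₀ : X × Y × U₀ → ℝ) (q₁ : X × Y × U₁ → ℝ)
    (G : X × Y × (U₀ ⊕ U₁) → β) (b : β) :
    dist (mix l q₀ q₁) G b
      = (1 - l) * dist q₀ (fun a => G (a.1, a.2.1, Sum.inl a.2.2)) b
        + l * dist q₁ (fun a => G (a.1, a.2.1, Sum.inr a.2.2)) b := by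
  unfold dist mix
  simp only [Fintype.sum_prod_type, Fintype.sum_sum_type, Sum.elim_inl, Sum.elim_inr,
    Finset.mul_sum, Finset.sum_add_distrib, mul_ite, mul_zero]

lemma dist_comp_aux {U : Type} [Fintype U] {p : X × Y → ℝ} {q : X × Y × U → ℝ}
    (hq : IsAux p q) (F : X × Y → β) (b : β) :
    dist q (fun a => F (a.1, a.2.1)) b = dist p F b := by
  unfold dist
  simp only [Fintype.sum_prod_type]
  refine Finset.sum_congr rfl fun x _ => Finset.sum_congr rfl fun y _ => ?_
  by_cases h : F (x, y) = b <;> simp [h, hq.2 x y]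

lemma pmf_dist {U : Type} [Fintype U] {p : X × Y → ℝ} {q : X × Y × U → ℝ}
    (hq : IsAux p q) (f : X × Y × U → β) :
    (∀ b, 0 ≤ dist q f b) ∧ ∑ b, dist q f b = 1 :=
  ⟨dist_nonneg' q hq.1.1 f, by rw [sum_dist]; exact hq.1.2⟩

lemma dmix_pair_inl (l : ℝ) (q₀ : X × Y × U₀ → ℝ) (q₁ : X × Y × U₁ → ℝ)
    (F : X × Y → β) (b : β) (u : U₀) :
    dist (mix l q₀ q₁) (fun a => (F (a.1, a.2.1), cU a)) (b, Sum.inl u)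
      = (1 - l) * dist q₀ (fun a => (F (a.1, a.2.1), cU a)) (b, u) := by
  rw [dist_mix]
  have h1 : dist q₁ (fun a : X × Y × U₁ =>
      ((fun a : X × Y × (U₀ ⊕ U₁) => (F (a.1, a.2.1), cU a)) (a.1, a.2.1, Sum.inr a.2.2)))
      (b, Sum.inl u) = 0 := by
    simp [dist, cU, Prod.ext_iff]
  have h0 : dist q₀ (fun a : X × Y × U₀ =>
      ((fun a : X × Y × (U₀ ⊕ U₁) => (F (a.1, a.2.1), cU a)) (a.1, a.2.1, Sum.inl a.2.2)))
      (b, Sum.inl u) = dist q₀ (fun a => (F (a.1, a.2.1), cU a)) (b, u) := by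
    simp [dist, cU, Prod.ext_iff]
  rw [h0, h1, mul_zero, add_zero]

lemma dmix_pair_inr (l : ℝ) (q₀ : X × Y × U₀ → ℝ) (q₁ : X × Y × U₁ → ℝ)
    (F : X × Y → β) (b : β) (u : U₁) :
    dist (mix l q₀ q₁) (fun a => (F (a.1, a.2.1), cU a)) (b, Sum.inr u)
      = l * dist q₁ (fun a => (F (a.1, a.2.1), cU a)) (b, u) := by
  rw [dist_mix]
  have h0 : dist q₀ (fun a : X × Y × U₀ =>
      ((fun a : X × Y × (U₀ ⊕ U₁) => (F (a.1, a.2.1), cU a)) (a.1, a.2.1, Sum.inl a.2.2)))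
      (b, Sum.inr u) = 0 := by
    simp [dist, cU, Prod.ext_iff]
  have h1 : dist q₁ (fun a : X × Y × U₁ =>
      ((fun a : X × Y × (U₀ ⊕ U₁) => (F (a.1, a.2.1), cU a)) (a.1, a.2.1, Sum.inr a.2.2)))
      (b, Sum.inr u) = dist q₁ (fun a => (F (a.1, a.2.1), cU a)) (b, u) := by
    simp [dist, cU, Prod.ext_iff]
  rw [h0, h1, mul_zero, zero_add]

lemma dmix_cU_inl (l : ℝ) (q₀ : X × Y × U₀ → ℝ) (q₁ : X × Y × U₁ → ℝ) (u : U₀) :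
    dist (mix l q₀ q₁) cU (Sum.inl u) = (1 - l) * dist q₀ cU u := by
  rw [show (cU : X × Y × (U₀ ⊕ U₁) → U₀ ⊕ U₁) = fun a => a.2.2 from rfl, dist_mix]
  have h1 : dist q₁ (fun a : X × Y × U₁ => (Sum.inr a.2.2 : U₀ ⊕ U₁)) (Sum.inl u) = 0 := by
    simp [dist]
  have h0 : dist q₀ (fun a : X × Y × U₀ => (Sum.inl a.2.2 : U₀ ⊕ U₁)) (Sum.inl u)
      = dist q₀ cU u := by
    simp [dist, cU]
    exact Finset.sum_congr rfl fun x _ => by split_ifs with h <;> simp [h]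
  rw [h0, h1, mul_zero, add_zero]

lemma dmix_cU_inr (l : ℝ) (q₀ : X × Y × U₀ → ℝ) (q₁ : X × Y × U₁ → ℝ) (u : U₁) :
    dist (mix l q₀ q₁) cU (Sum.inr u) = l * dist q₁ cU u := by
  rw [show (cU : X × Y × (U₀ ⊕ U₁) → U₀ ⊕ U₁) = fun a => a.2.2 from rfl, dist_mix]
  have h0 : dist q₀ (fun a : X × Y × U₀ => (Sum.inl a.2.2 : U₀ ⊕ U₁)) (Sum.inr u) = 0 := by
    simp [dist]
  have h1 : dist q₁ (fun a : X × Y × U₁ => (Sum.inr a.2.2 : U₀ ⊕ U₁)) (Sum.inr u)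
      = dist q₁ cU u := by
    simp [dist, cU]
    exact Finset.sum_congr rfl fun x _ => by split_ifs with h <;> simp [h]
  rw [h0, h1, mul_zero, zero_add]

lemma H_comp {U : Type} [Fintype U] {p : X × Y → ℝ} {q : X × Y × U → ℝ}
    (hq : IsAux p q) (F : X × Y → β) :
    H q (fun a => F (a.1, a.2.1)) = H p F :=
  Finset.sum_congr rfl fun b _ => by rw [dist_comp_aux hq F b]

lemma isAux_mix {p : X × Y → ℝ} {q₀ : X × Y × U₀ → ℝ} {q₁ : X × Y × U₁ → ℝ}
    (hp : IsPMF p) (hq₀ : IsAux p q₀) (hq₁ : IsAux p q₁)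
    (l : ℝ) (hl0 : 0 ≤ l) (hl1 : l ≤ 1) :
    IsAux p (mix l q₀ q₁) := by
  have hmarg : ∀ x y, (∑ w : U₀ ⊕ U₁, mix l q₀ q₁ (x, y, w)) = p (x, y) := by
    intro x y
    rw [Fintype.sum_sum_type]
    simp only [mix, Sum.elim_inl, Sum.elim_inr]
    rw [← Finset.mul_sum, ← Finset.mul_sum, hq₀.2 x y, hq₁.2 x y]
    ring
  refine ⟨⟨?_, ?_⟩, hmarg⟩
  · rintro ⟨x, y, u | u⟩
    · exact mul_nonneg (by linarith) (hq₀.1.1 _)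
    · exact mul_nonneg hl0 (hq₁.1.1 _)
  · simp only [Fintype.sum_prod_type, hmarg]
    rw [← Fintype.sum_prod_type (f := p)]
    exact hp.2

lemma H_mix_cU {p : X × Y → ℝ} {q₀ : X × Y × U₀ → ℝ} {q₁ : X × Y × U₁ → ℝ}
    (hq₀ : IsAux p q₀) (hq₁ : IsAux p q₁) (l : ℝ) (hl0 : 0 ≤ l) (hl1 : l ≤ 1) :
    H (mix l q₀ q₁) (cU : X × Y × (U₀ ⊕ U₁) → U₀ ⊕ U₁)
      = ((1 - l) * H q₀ cU - (1 - l) * Real.logb 2 (1 - l))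
        + (l * H q₁ cU - l * Real.logb 2 l) := by
  unfold H
  rw [Fintype.sum_sum_type]
  simp only [dmix_cU_inl, dmix_cU_inr]
  rw [sum_scaled (1 - l) (by linarith) _ (pmf_dist hq₀ cU).1 (pmf_dist hq₀ cU).2,
      sum_scaled l hl0 _ (pmf_dist hq₁ cU).1 (pmf_dist hq₁ cU).2]

lemma H_mix_pair {p : X × Y → ℝ} {q₀ : X × Y × U₀ → ℝ} {q₁ : X × Y × U₁ → ℝ}
    (hq₀ : IsAux p q₀) (hq₁ : IsAux p q₁) (F : X × Y → β)
    (l : ℝ) (hl0 : 0 ≤ l) (hl1 : l ≤ 1) :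
    H (mix l q₀ q₁) (fun a => (F (a.1, a.2.1), cU a))
      = ((1 - l) * H q₀ (fun a => (F (a.1, a.2.1), cU a))
          - (1 - l) * Real.logb 2 (1 - l))
        + (l * H q₁ (fun a => (F (a.1, a.2.1), cU a)) - l * Real.logb 2 l) := by
  unfold H
  rw [Fintype.sum_prod_type]
  simp only [Fintype.sum_sum_type, dmix_pair_inl, dmix_pair_inr]
  rw [Finset.sum_add_distrib]
  rw [← Fintype.sum_prod_type (f := fun z : β × U₀ =>
        -((1 - l) * dist q₀ (fun a => (F (a.1, a.2.1), cU a)) z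
          * Real.logb 2 ((1 - l) * dist q₀ (fun a => (F (a.1, a.2.1), cU a)) z)))]
  rw [← Fintype.sum_prod_type (f := fun z : β × U₁ =>
        -(l * dist q₁ (fun a => (F (a.1, a.2.1), cU a)) z
          * Real.logb 2 (l * dist q₁ (fun a => (F (a.1, a.2.1), cU a)) z)))]
  rw [sum_scaled (1 - l) (by linarith) _ (pmf_dist hq₀ _).1 (pmf_dist hq₀ _).2,
      sum_scaled l hl0 _ (pmf_dist hq₁ _).1 (pmf_dist hq₁ _).2]

lemma I2_mix {p : X × Y → ℝ} {q₀ : X × Y × U₀ → ℝ} {q₁ : X × Y × U₁ → ℝ}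
    (hp : IsPMF p) (hq₀ : IsAux p q₀) (hq₁ : IsAux p q₁) (F : X × Y → β)
    (l : ℝ) (hl0 : 0 ≤ l) (hl1 : l ≤ 1) :
    I2 (mix l q₀ q₁) (fun a => F (a.1, a.2.1)) cU
      = (1 - l) * I2 q₀ (fun a => F (a.1, a.2.1)) cU
        + l * I2 q₁ (fun a => F (a.1, a.2.1)) cU := by
  have hmix := isAux_mix hp hq₀ hq₁ l hl0 hl1
  unfold I2
  have e : ∀ {U : Type} [Fintype U], (fun a : X × Y × U => ((fun a : X × Y × U => F (a.1, a.2.1)) a, cU a))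
      = fun a : X × Y × U => (F (a.1, a.2.1), cU a) := fun {U} [Fintype U] => rfl
  rw [e, e, e, H_comp hmix F, H_comp hq₀ F, H_comp hq₁ F,
      H_mix_cU hq₀ hq₁ l hl0 hl1, H_mix_pair hq₀ hq₁ F l hl0 hl1]
  ring

end Mix

lemma mix_mem {X Y : Type} [Fintype X] [Fintype Y] (p : X × Y → ℝ) (hp : IsPMF p)
    (U₀ U₁ : Type) (i₀ : Fintype U₀) (i₁ : Fintype U₁)
    (q₀ : X × Y × U₀ → ℝ) (q₁ : X × Y × U₁ → ℝ)
    (hq₀ : IsAux p q₀) (hq₁ : IsAux p q₁) (l : ℝ) (hl0 : 0 ≤ l) (hl1 : l ≤ 1) :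
    (1 - l) • ((I2 q₀ cX cU, I2 q₀ cY cU, I2 q₀ cXY cU) : ℝ × ℝ × ℝ)
      + l • ((I2 q₁ cX cU, I2 q₁ cY cU, I2 q₁ cXY cU) : ℝ × ℝ × ℝ) ∈ MIRegion p := by
  refine ⟨U₀ ⊕ U₁, inferInstance, mix l q₀ q₁, isAux_mix hp hq₀ hq₁ l hl0 hl1, ?_⟩
  have hX := I2_mix hp hq₀ hq₁ Prod.fst l hl0 hl1
  have hY := I2_mix hp hq₀ hq₁ Prod.snd l hl0 hl1
  have hXY := I2_mix hp hq₀ hq₁ id l hl0 hl1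
  simp only [Prod.smul_mk, Prod.mk_add_mk, smul_eq_mul, Prod.mk.injEq]
  exact ⟨hX.symm, hY.symm, hXY.symm⟩

/-- the mutual information region is convex: every convex combination of two
points achieved by auxiliary random variables `U₀`, `U₁` again lies in `𝓘_{XY}`. -/
theorem stmt1 {X Y : Type} [Fintype X] [Fintype Y] (p : X × Y → ℝ) (hp : IsPMF p) :
    Convex ℝ (MIRegion p) ∧
    ∀ (U₀ U₁ : Type) (_ : Fintype U₀) (_ : Fintype U₁)
      (q₀ : X × Y × U₀ → ℝ) (q₁ : X × Y × U₁ → ℝ),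
      IsAux p q₀ → IsAux p q₁ → ∀ l : ℝ, 0 ≤ l → l ≤ 1 →
      (1 - l) • ((I2 q₀ cX cU, I2 q₀ cY cU, I2 q₀ cXY cU) : ℝ × ℝ × ℝ)
        + l • ((I2 q₁ cX cU, I2 q₁ cY cU, I2 q₁ cXY cU) : ℝ × ℝ × ℝ) ∈ MIRegion p := by
  constructor
  · intro v hv w hw a b ha hb hab
    obtain ⟨U₀, i₀, q₀, hq₀, rfl⟩ := hv
    obtain ⟨U₁, i₁, q₁, hq₁, rfl⟩ := hw
    have hab' : a = 1 - b := by linarith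
    rw [hab']
    exact mix_mem p hp U₀ U₁ i₀ i₁ q₀ q₁ hq₀ hq₁ b hb (by linarith)
  · intro U₀ U₁ i₀ i₁ q₀ q₁ hq₀ hq₁ l hl0 hl1
    exact mix_mem p hp U₀ U₁ i₀ i₁ q₀ q₁ hq₀ hq₁ l hl0 hl1

end GW
end
end

section
/- If the pair (X₁,Y₁) is independent of the pair (X₂,Y₂), then 𝓘_{X₁,Y₁} + 𝓘_{X₂,Y₂} ⊆ 𝓘_{(X₁,X₂),(Y₁,Y₂)}, where + denotes the Minkowski sum. Consequently, if (X₁,Y₁),…,(Xₙ,Yₙ) are i.i.d. with common joint pmf p_{XY}, then 𝓘_{XY} ⊆ (1/n)·𝓘_{Xⁿ,Yⁿ}. -/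
open scoped BigOperators Pointwise Classical

noncomputable section

namespace GW

-- sum of dist
lemma dist_sum {α β : Type} [Fintype α] [Fintype β] (p : α → ℝ) (f : α → β) :
    ∑ b, dist p f b = ∑ a, p a := by
  unfold dist
  rw [Finset.sum_comm]
  refine Finset.sum_congr rfl fun a _ => ?_
  simp

-- invariance under domain equiv
lemma H_comp_equiv {α α' β : Type} [Fintype α] [Fintype α'] [Fintype β]
    (p : α → ℝ) (f : α → β) (e : α' ≃ α) :
    H (fun a => p (e a)) (fun a => f (e a)) = H p f := by
  unfold H
  refine Finset.sum_congr rfl fun b _ => ?_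
  have : dist (fun a => p (e a)) (fun a => f (e a)) b = dist p f b := by
    unfold dist
    exact Equiv.sum_comp e (fun a => if f a = b then p a else 0)
  rw [this]

lemma I2_comp_equiv {α α' β γ : Type} [Fintype α] [Fintype α'] [Fintype β] [Fintype γ]
    (p : α → ℝ) (f : α → β) (g : α → γ) (e : α' ≃ α) :
    I2 (fun a => p (e a)) (fun a => f (e a)) (fun a => g (e a)) = I2 p f g := by
  unfold I2
  rw [H_comp_equiv p f e, H_comp_equiv p g e, H_comp_equiv p (fun a => (f a, g a)) e]

lemma I2_comp_inj_left {α β β' γ : Type} [Fintype α] [Fintype β] [Fintype β'] [Fintype γ]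
    (p : α → ℝ) (f : α → β) (g : α → γ) (e : β → β') (he : Function.Injective e) :
    I2 p (fun a => e (f a)) g = I2 p f g := by
  unfold I2
  rw [H_comp_inj p f e he]
  congr 1
  have : (fun a => (e (f a), g a)) = fun a => (fun x : β × γ => (e x.1, x.2)) ((fun a => (f a, g a)) a) := rfl
  rw [this, H_comp_inj p (fun a => (f a, g a)) (fun x : β × γ => (e x.1, x.2))]
  intro x y h
  simp only [Prod.mk.injEq] at h
  exact Prod.ext (he h.1) h.2

-- binary product
lemma dist_mul {α₁ α₂ β₁ β₂ : Type} [Fintype α₁] [Fintype α₂]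
    (p₁ : α₁ → ℝ) (p₂ : α₂ → ℝ) (f₁ : α₁ → β₁) (f₂ : α₂ → β₂) (b : β₁ × β₂) :
    dist (fun a : α₁ × α₂ => p₁ a.1 * p₂ a.2) (fun a => (f₁ a.1, f₂ a.2)) b
      = dist p₁ f₁ b.1 * dist p₂ f₂ b.2 := by
  unfold dist
  rw [Fintype.sum_prod_type, Finset.sum_mul_sum]
  refine Finset.sum_congr rfl fun a₁ _ => Finset.sum_congr rfl fun a₂ _ => ?_
  by_cases h1 : f₁ a₁ = b.1 <;> by_cases h2 : f₂ a₂ = b.2 <;>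
    simp [h1, h2, Prod.ext_iff]

lemma mul_logb_mul (x y : ℝ) :
    x * y * Real.logb 2 (x * y) = x * y * Real.logb 2 x + x * y * Real.logb 2 y := by
  by_cases hx : x = 0
  · simp [hx]
  by_cases hy : y = 0
  · simp [hy]
  rw [Real.logb_mul hx hy]; ring

lemma H_mul {α₁ α₂ β₁ β₂ : Type} [Fintype α₁] [Fintype α₂] [Fintype β₁] [Fintype β₂]
    (p₁ : α₁ → ℝ) (p₂ : α₂ → ℝ) (h₁ : ∑ a, p₁ a = 1) (h₂ : ∑ a, p₂ a = 1)
    (f₁ : α₁ → β₁) (f₂ : α₂ → β₂) :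
    H (fun a : α₁ × α₂ => p₁ a.1 * p₂ a.2) (fun a => (f₁ a.1, f₂ a.2))
      = H p₁ f₁ + H p₂ f₂ := by
  have hs₁ : ∑ b, dist p₁ f₁ b = 1 := by rw [dist_sum]; exact h₁
  have hs₂ : ∑ b, dist p₂ f₂ b = 1 := by rw [dist_sum]; exact h₂
  unfold H
  simp only [dist_mul]
  rw [Fintype.sum_prod_type]
  have key : ∀ b₁ : β₁, ∑ b₂ : β₂,
      -(dist p₁ f₁ b₁ * dist p₂ f₂ b₂ * Real.logb 2 (dist p₁ f₁ b₁ * dist p₂ f₂ b₂))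
      = -(dist p₁ f₁ b₁ * Real.logb 2 (dist p₁ f₁ b₁))
        + dist p₁ f₁ b₁ * (∑ b₂, -(dist p₂ f₂ b₂ * Real.logb 2 (dist p₂ f₂ b₂))) := by
    intro b₁
    have : ∀ b₂, -(dist p₁ f₁ b₁ * dist p₂ f₂ b₂ * Real.logb 2 (dist p₁ f₁ b₁ * dist p₂ f₂ b₂))
        = -(dist p₁ f₁ b₁ * Real.logb 2 (dist p₁ f₁ b₁)) * dist p₂ f₂ b₂
          + dist p₁ f₁ b₁ * -(dist p₂ f₂ b₂ * Real.logb 2 (dist p₂ f₂ b₂)) := by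
      intro b₂; rw [mul_logb_mul]; ring
    rw [Finset.sum_congr rfl fun b₂ _ => this b₂, Finset.sum_add_distrib,
      ← Finset.mul_sum, ← Finset.mul_sum, hs₂, mul_one]
  rw [Finset.sum_congr rfl fun b₁ _ => key b₁, Finset.sum_add_distrib,
    ← Finset.sum_mul, hs₁, one_mul]

lemma I2_mul {α₁ α₂ β₁ β₂ γ₁ γ₂ : Type} [Fintype α₁] [Fintype α₂] [Fintype β₁]
    [Fintype β₂] [Fintype γ₁] [Fintype γ₂]
    (p₁ : α₁ → ℝ) (p₂ : α₂ → ℝ) (h₁ : ∑ a, p₁ a = 1) (h₂ : ∑ a, p₂ a = 1)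
    (f₁ : α₁ → β₁) (f₂ : α₂ → β₂) (g₁ : α₁ → γ₁) (g₂ : α₂ → γ₂) :
    I2 (fun a : α₁ × α₂ => p₁ a.1 * p₂ a.2) (fun a => (f₁ a.1, f₂ a.2))
        (fun a => (g₁ a.1, g₂ a.2))
      = I2 p₁ f₁ g₁ + I2 p₂ f₂ g₂ := by
  unfold I2
  rw [H_mul p₁ p₂ h₁ h₂ f₁ f₂, H_mul p₁ p₂ h₁ h₂ g₁ g₂]
  have hsw : Function.Injective
      (fun x : (β₁ × γ₁) × (β₂ × γ₂) => ((x.1.1, x.2.1), (x.1.2, x.2.2))) := by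
    intro x y h
    simp only [Prod.mk.injEq] at h
    exact Prod.ext (Prod.ext h.1.1 h.2.1) (Prod.ext h.1.2 h.2.2)
  have hre : H (fun a : α₁ × α₂ => p₁ a.1 * p₂ a.2)
      (fun a => ((fun a : α₁ × α₂ => (f₁ a.1, f₂ a.2)) a, (fun a : α₁ × α₂ => (g₁ a.1, g₂ a.2)) a))
      = H (fun a : α₁ × α₂ => p₁ a.1 * p₂ a.2)
        (fun a => (fun x : (β₁ × γ₁) × (β₂ × γ₂) => ((x.1.1, x.2.1), (x.1.2, x.2.2)))
          ((fun a : α₁ × α₂ => ((f₁ a.1, g₁ a.1), (f₂ a.2, g₂ a.2))) a)) := rfl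
  rw [hre, H_comp_inj (fun a : α₁ × α₂ => p₁ a.1 * p₂ a.2)
      (fun a => ((f₁ a.1, g₁ a.1), (f₂ a.2, g₂ a.2))) _ hsw,
    H_mul p₁ p₂ h₁ h₂ (fun a => (f₁ a, g₁ a)) (fun a => (f₂ a, g₂ a))]
  ring

-- pi versions
lemma dist_pi {ι : Type} [DecidableEq ι] [Fintype ι] {α β : ι → Type} [∀ i, Fintype (α i)]
    (p : ∀ i, α i → ℝ) (f : ∀ i, α i → β i) (b : ∀ i, β i) :
    dist (fun a : ∀ i, α i => ∏ i, p i (a i)) (fun a i => f i (a i)) b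
      = ∏ i, dist (p i) (f i) (b i) := by
  unfold dist
  rw [Fintype.prod_sum]
  refine Finset.sum_congr rfl fun a _ => ?_
  by_cases h : ∀ i, f i (a i) = b i
  · rw [if_pos (funext h)]
    exact (Finset.prod_congr rfl fun i _ => (if_pos (h i)).symm)
  · push_neg at h
    obtain ⟨i, hi⟩ := h
    rw [if_neg (by intro hc; exact hi (congrFun hc i))]
    exact (Finset.prod_eq_zero (Finset.mem_univ i)
      (if_neg hi : (if f i (a i) = b i then p i (a i) else 0) = 0)).symm

lemma prod_logb_prod {ι : Type} [Fintype ι] (x : ι → ℝ) :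
    (∏ i, x i) * Real.logb 2 (∏ i, x i) = ∑ j, (∏ i, x i) * Real.logb 2 (x j) := by
  by_cases h : ∀ i ∈ Finset.univ, x i ≠ 0
  · rw [Real.logb_prod _ _ h, Finset.mul_sum]
  · push_neg at h
    obtain ⟨i, _, hi⟩ := h
    have hz : ∏ i, x i = 0 := Finset.prod_eq_zero (Finset.mem_univ i) hi
    simp [hz]

set_option maxHeartbeats 1000000 in
lemma H_pi {ι : Type} [DecidableEq ι] [Fintype ι] {α β : ι → Type} [∀ i, Fintype (α i)] [∀ i, Fintype (β i)]
    (p : ∀ i, α i → ℝ) (hp : ∀ i, ∑ a, p i a = 1) (f : ∀ i, α i → β i) :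
    H (fun a : ∀ i, α i => ∏ i, p i (a i)) (fun a i => f i (a i))
      = ∑ i, H (p i) (f i) := by
  unfold H
  simp only [dist_pi]
  have key : ∀ b : ∀ i, β i,
      -((∏ i, dist (p i) (f i) (b i)) * Real.logb 2 (∏ i, dist (p i) (f i) (b i)))
      = ∑ j, -((∏ i, dist (p i) (f i) (b i)) * Real.logb 2 (dist (p j) (f j) (b j))) := by
    intro b
    rw [prod_logb_prod]
    exact (Finset.sum_neg_distrib _).symm
  rw [Finset.sum_congr rfl fun b _ => key b, Finset.sum_comm]
  refine Finset.sum_congr rfl fun j _ => ?_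
  have hg : ∀ b : ∀ i, β i,
      -((∏ i, dist (p i) (f i) (b i)) * Real.logb 2 (dist (p j) (f j) (b j)))
      = ∏ i, (if i = j then
          -(dist (p i) (f i) (b i) * Real.logb 2 (dist (p i) (f i) (b i)))
        else dist (p i) (f i) (b i)) := by
    intro b
    have h1 : (∏ i, dist (p i) (f i) (b i))
        = dist (p j) (f j) (b j) * ∏ i ∈ Finset.univ.erase j, dist (p i) (f i) (b i) :=
      (Finset.mul_prod_erase Finset.univ _ (Finset.mem_univ j)).symm
    have h2 : (∏ i, (if i = j then
          -(dist (p i) (f i) (b i) * Real.logb 2 (dist (p i) (f i) (b i)))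
        else dist (p i) (f i) (b i)))
        = -(dist (p j) (f j) (b j) * Real.logb 2 (dist (p j) (f j) (b j)))
          * ∏ i ∈ Finset.univ.erase j, dist (p i) (f i) (b i) := by
      rw [← Finset.mul_prod_erase Finset.univ _ (Finset.mem_univ j), if_pos rfl]
      congr 1
      refine Finset.prod_congr rfl fun i hi => ?_
      rw [if_neg (Finset.ne_of_mem_erase hi)]
    rw [h1, h2]; ring
  rw [Finset.sum_congr rfl fun b _ => hg b]
  calc ∑ b : ∀ i, β i, ∏ i, (if i = j then
          -(dist (p i) (f i) (b i) * Real.logb 2 (dist (p i) (f i) (b i)))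
        else dist (p i) (f i) (b i))
      = ∏ i, ∑ c, (if i = j then
          -(dist (p i) (f i) c * Real.logb 2 (dist (p i) (f i) c))
        else dist (p i) (f i) c) :=
        (Fintype.prod_sum (fun i c => if i = j then
          -(dist (p i) (f i) c * Real.logb 2 (dist (p i) (f i) c))
        else dist (p i) (f i) c)).symm
    _ = ∑ c, (if j = j then
          -(dist (p j) (f j) c * Real.logb 2 (dist (p j) (f j) c))
        else dist (p j) (f j) c) := by
        apply Finset.prod_eq_single
        · intro i _ hij
          simp only [if_neg hij]
          rw [dist_sum]; exact hp i
        · intro h; exact absurd (Finset.mem_univ j) h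
    _ = ∑ c, -(dist (p j) (f j) c * Real.logb 2 (dist (p j) (f j) c)) := by simp

lemma I2_pi {ι : Type} [DecidableEq ι] [Fintype ι] {α β γ : ι → Type} [∀ i, Fintype (α i)]
    [∀ i, Fintype (β i)] [∀ i, Fintype (γ i)]
    (p : ∀ i, α i → ℝ) (hp : ∀ i, ∑ a, p i a = 1)
    (f : ∀ i, α i → β i) (g : ∀ i, α i → γ i) :
    I2 (fun a : ∀ i, α i => ∏ i, p i (a i)) (fun a i => f i (a i)) (fun a i => g i (a i))
      = ∑ i, I2 (p i) (f i) (g i) := by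
  unfold I2
  rw [H_pi p hp f, H_pi p hp g]
  have hsw : Function.Injective
      (fun x : ∀ i, β i × γ i => ((fun i => (x i).1, fun i => (x i).2) : (∀ i, β i) × (∀ i, γ i))) := by
    intro x y h
    simp only [Prod.mk.injEq] at h
    funext i
    exact Prod.ext (congrFun h.1 i) (congrFun h.2 i)
  have hre : H (fun a : ∀ i, α i => ∏ i, p i (a i))
      (fun a => ((fun a : ∀ i, α i => fun i => f i (a i)) a, (fun a : ∀ i, α i => fun i => g i (a i)) a))
      = H (fun a : ∀ i, α i => ∏ i, p i (a i))
        (fun a => (fun x : ∀ i, β i × γ i => ((fun i => (x i).1, fun i => (x i).2) : (∀ i, β i) × (∀ i, γ i)))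
          ((fun a : ∀ i, α i => fun i => (f i (a i), g i (a i))) a)) := rfl
  rw [hre, H_comp_inj (fun a : ∀ i, α i => ∏ i, p i (a i))
      (fun a => fun i => (f i (a i), g i (a i))) _ hsw,
    H_pi p hp (fun i a => (f i a, g i a))]
  rw [← Finset.sum_add_distrib, ← Finset.sum_sub_distrib]


section Stmt6Aux

variable {X₁ Y₁ U₁ X₂ Y₂ U₂ : Type}

/-- Reassociating equiv for the binary case. -/
def E3 : ((X₁ × X₂) × (Y₁ × Y₂) × (U₁ × U₂)) ≃ ((X₁ × Y₁ × U₁) × (X₂ × Y₂ × U₂)) where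
  toFun a := ((a.1.1, a.2.1.1, a.2.2.1), (a.1.2, a.2.1.2, a.2.2.2))
  invFun b := ((b.1.1, b.2.1), (b.1.2.1, b.2.2.1), (b.1.2.2, b.2.2.2))
  left_inv _ := rfl
  right_inv _ := rfl

lemma sw_inj : Function.Injective
    (fun x : (X₁ × Y₁) × (X₂ × Y₂) => (((x.1.1, x.2.1), (x.1.2, x.2.2)) :
      (X₁ × X₂) × (Y₁ × Y₂))) := by
  intro x y h
  simp only [Prod.mk.injEq] at h
  exact Prod.ext (Prod.ext h.1.1 h.2.1) (Prod.ext h.1.2 h.2.2)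

/-- Reassociating equiv for the `n`-fold case. -/
def EPi (n : ℕ) {X Y U : Type} : ((Fin n → X) × (Fin n → Y) × (Fin n → U)) ≃ (Fin n → X × Y × U) where
  toFun a := fun i => (a.1 i, a.2.1 i, a.2.2 i)
  invFun b := (fun i => (b i).1, fun i => (b i).2.1, fun i => (b i).2.2)
  left_inv _ := rfl
  right_inv _ := rfl

lemma swPi_inj {n : ℕ} {X Y : Type} : Function.Injective
    (fun x : Fin n → X × Y => (((fun i => (x i).1, fun i => (x i).2)) :
      (Fin n → X) × (Fin n → Y))) := by
  intro x y h
  simp only [Prod.mk.injEq] at h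
  funext i
  exact Prod.ext (congrFun h.1 i) (congrFun h.2 i)

end Stmt6Aux

set_option maxHeartbeats 1000000 in
/-- superadditivity of the mutual information region for independent pairs
(the joint pmf of `((X₁,X₂),(Y₁,Y₂))` is the product of the pmfs of `(X₁,Y₁)` and `(X₂,Y₂)`),
and the consequence `𝓘_{XY} ⊆ (1/n)·𝓘_{Xⁿ,Yⁿ}` for an i.i.d. source. -/
theorem stmt6 {X₁ Y₁ X₂ Y₂ : Type} [Fintype X₁] [Fintype Y₁] [Fintype X₂] [Fintype Y₂]
    (p₁ : X₁ × Y₁ → ℝ) (p₂ : X₂ × Y₂ → ℝ) (h₁ : IsPMF p₁) (h₂ : IsPMF p₂)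
    {X Y : Type} [Fintype X] [Fintype Y] (p : X × Y → ℝ) (hp : IsPMF p)
    (n : ℕ) (hn : 0 < n) :
    MIRegion p₁ + MIRegion p₂ ⊆
        MIRegion (fun a : (X₁ × X₂) × (Y₁ × Y₂) => p₁ (a.1.1, a.2.1) * p₂ (a.1.2, a.2.2)) ∧
    MIRegion p ⊆
        ((n : ℝ)⁻¹) • MIRegion (fun a : (Fin n → X) × (Fin n → Y) => ∏ i, p (a.1 i, a.2 i)) := by
  constructor
  · rintro v hv
    rw [Set.mem_add] at hv
    obtain ⟨v₁, hv₁, v₂, hv₂, rfl⟩ := hv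
    obtain ⟨U₁, iU₁, q₁', ⟨⟨hq₁nn, hq₁s⟩, hm₁⟩, rfl⟩ := hv₁
    obtain ⟨U₂, iU₂, q₂', ⟨⟨hq₂nn, hq₂s⟩, hm₂⟩, rfl⟩ := hv₂

    set Q : (X₁ × Y₁ × U₁) × (X₂ × Y₂ × U₂) → ℝ := fun b => q₁' b.1 * q₂' b.2 with hQ
    have c1 : I2 (fun a => Q (E3 a)) (cX (X := X₁ × X₂) (Y := Y₁ × Y₂) (U := U₁ × U₂)) cU
        = I2 q₁' cX cU + I2 q₂' cX cU := by
      calc I2 (fun a => Q (E3 a)) cX cU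
          = I2 Q (fun b => ((cX b.1 : X₁), (cX b.2 : X₂)))
              (fun b => ((cU b.1 : U₁), (cU b.2 : U₂))) :=
            I2_comp_equiv Q (fun b => ((cX b.1 : X₁), (cX b.2 : X₂)))
              (fun b => ((cU b.1 : U₁), (cU b.2 : U₂))) E3
        _ = I2 q₁' cX cU + I2 q₂' cX cU := I2_mul q₁' q₂' hq₁s hq₂s cX cX cU cU
    have c2 : I2 (fun a => Q (E3 a)) (cY (X := X₁ × X₂) (Y := Y₁ × Y₂) (U := U₁ × U₂)) cU
        = I2 q₁' cY cU + I2 q₂' cY cU := by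
      calc I2 (fun a => Q (E3 a)) cY cU
          = I2 Q (fun b => ((cY b.1 : Y₁), (cY b.2 : Y₂)))
              (fun b => ((cU b.1 : U₁), (cU b.2 : U₂))) :=
            I2_comp_equiv Q (fun b => ((cY b.1 : Y₁), (cY b.2 : Y₂)))
              (fun b => ((cU b.1 : U₁), (cU b.2 : U₂))) E3
        _ = I2 q₁' cY cU + I2 q₂' cY cU := I2_mul q₁' q₂' hq₁s hq₂s cY cY cU cU
    have c3 : I2 (fun a => Q (E3 a)) (cXY (X := X₁ × X₂) (Y := Y₁ × Y₂) (U := U₁ × U₂)) cU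
        = I2 q₁' cXY cU + I2 q₂' cXY cU := by
      calc I2 (fun a => Q (E3 a)) cXY cU
          = I2 Q (fun b => (fun x : (X₁ × Y₁) × (X₂ × Y₂) => ((x.1.1, x.2.1), (x.1.2, x.2.2)))
                ((fun b : (X₁ × Y₁ × U₁) × (X₂ × Y₂ × U₂) => ((cXY b.1 : X₁ × Y₁), (cXY b.2 : X₂ × Y₂))) b))
              (fun b => ((cU b.1 : U₁), (cU b.2 : U₂))) :=
            I2_comp_equiv Q
              (fun b => (fun x : (X₁ × Y₁) × (X₂ × Y₂) => ((x.1.1, x.2.1), (x.1.2, x.2.2)))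
                ((fun b : (X₁ × Y₁ × U₁) × (X₂ × Y₂ × U₂) => ((cXY b.1 : X₁ × Y₁), (cXY b.2 : X₂ × Y₂))) b))
              (fun b => ((cU b.1 : U₁), (cU b.2 : U₂))) E3
        _ = I2 Q (fun b => ((cXY b.1 : X₁ × Y₁), (cXY b.2 : X₂ × Y₂)))
              (fun b => ((cU b.1 : U₁), (cU b.2 : U₂))) :=
            I2_comp_inj_left Q
              (fun b : (X₁ × Y₁ × U₁) × (X₂ × Y₂ × U₂) => ((cXY b.1 : X₁ × Y₁), (cXY b.2 : X₂ × Y₂)))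
              (fun b => ((cU b.1 : U₁), (cU b.2 : U₂)))
              (fun x : (X₁ × Y₁) × (X₂ × Y₂) => ((x.1.1, x.2.1), (x.1.2, x.2.2))) sw_inj
        _ = I2 q₁' cXY cU + I2 q₂' cXY cU := I2_mul q₁' q₂' hq₁s hq₂s cXY cXY cU cU
    refine ⟨U₁ × U₂, inferInstance, fun a => Q (E3 a), ⟨⟨?_, ?_⟩, ?_⟩, ?_⟩
    · intro a
      exact mul_nonneg (hq₁nn _) (hq₂nn _)
    · calc ∑ a, Q (E3 a) = ∑ b, Q b := Equiv.sum_comp E3 Q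
        _ = ∑ x : X₁ × Y₁ × U₁, ∑ y : X₂ × Y₂ × U₂, q₁' x * q₂' y := Fintype.sum_prod_type _
        _ = (∑ x, q₁' x) * (∑ y, q₂' y) := (Finset.sum_mul_sum _ _ _ _).symm
        _ = 1 := by rw [hq₁s, hq₂s, mul_one]
    · intro x y
      calc ∑ u : U₁ × U₂, Q (E3 (x, y, u))
          = ∑ u₁ : U₁, ∑ u₂ : U₂, q₁' (x.1, y.1, u₁) * q₂' (x.2, y.2, u₂) :=
            Fintype.sum_prod_type _
        _ = (∑ u₁, q₁' (x.1, y.1, u₁)) * ∑ u₂, q₂' (x.2, y.2, u₂) :=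
            (Finset.sum_mul_sum _ _ _ _).symm
        _ = p₁ (x.1, y.1) * p₂ (x.2, y.2) := by rw [hm₁, hm₂]
    · rw [Prod.ext_iff, Prod.ext_iff]
      refine ⟨c1.symm, c2.symm, c3.symm⟩
  · rintro v ⟨U, iU, q, ⟨⟨hnn, hs⟩, hm⟩, rfl⟩

    set Qn : (Fin n → X × Y × U) → ℝ := fun b => ∏ i, q (b i) with hQn
    have hnne : (n : ℝ) ≠ 0 := Nat.cast_ne_zero.2 hn.ne'
    have c1 : I2 (fun a => Qn (EPi n a)) (cX (X := Fin n → X) (Y := Fin n → Y) (U := Fin n → U)) cU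
        = (n : ℝ) * I2 q cX cU := by
      calc I2 (fun a => Qn (EPi n a)) cX cU
          = I2 Qn (fun b i => ((cX (b i) : X))) (fun b i => ((cU (b i) : U))) :=
            I2_comp_equiv Qn (fun b i => ((cX (b i) : X))) (fun b i => ((cU (b i) : U))) (EPi n)
        _ = ∑ _i : Fin n, I2 q cX cU :=
            I2_pi (fun _ => q) (fun _ => hs) (fun _ c => cX c) (fun _ c => cU c)
        _ = (n : ℝ) * I2 q cX cU := by
            rw [Finset.sum_const, Finset.card_univ, Fintype.card_fin, nsmul_eq_mul]
    have c2 : I2 (fun a => Qn (EPi n a)) (cY (X := Fin n → X) (Y := Fin n → Y) (U := Fin n → U)) cU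
        = (n : ℝ) * I2 q cY cU := by
      calc I2 (fun a => Qn (EPi n a)) cY cU
          = I2 Qn (fun b i => ((cY (b i) : Y))) (fun b i => ((cU (b i) : U))) :=
            I2_comp_equiv Qn (fun b i => ((cY (b i) : Y))) (fun b i => ((cU (b i) : U))) (EPi n)
        _ = ∑ _i : Fin n, I2 q cY cU :=
            I2_pi (fun _ => q) (fun _ => hs) (fun _ c => cY c) (fun _ c => cU c)
        _ = (n : ℝ) * I2 q cY cU := by
            rw [Finset.sum_const, Finset.card_univ, Fintype.card_fin, nsmul_eq_mul]
    have c3 : I2 (fun a => Qn (EPi n a)) (cXY (X := Fin n → X) (Y := Fin n → Y) (U := Fin n → U)) cU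
        = (n : ℝ) * I2 q cXY cU := by
      calc I2 (fun a => Qn (EPi n a)) cXY cU
          = I2 Qn (fun b => (fun x : Fin n → X × Y => ((fun i => (x i).1, fun i => (x i).2) :
                (Fin n → X) × (Fin n → Y)))
                ((fun b : Fin n → X × Y × U => fun i => (cXY (b i) : X × Y)) b))
              (fun b i => ((cU (b i) : U))) :=
            I2_comp_equiv Qn
              (fun b => (fun x : Fin n → X × Y => ((fun i => (x i).1, fun i => (x i).2) :
                (Fin n → X) × (Fin n → Y)))
                ((fun b : Fin n → X × Y × U => fun i => (cXY (b i) : X × Y)) b))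
              (fun b i => ((cU (b i) : U))) (EPi n)
        _ = I2 Qn (fun b i => (cXY (b i) : X × Y)) (fun b i => ((cU (b i) : U))) :=
            I2_comp_inj_left Qn (fun b : Fin n → X × Y × U => fun i => (cXY (b i) : X × Y))
              (fun b i => ((cU (b i) : U)))
              (fun x : Fin n → X × Y => ((fun i => (x i).1, fun i => (x i).2) :
                (Fin n → X) × (Fin n → Y))) swPi_inj
        _ = ∑ _i : Fin n, I2 q cXY cU :=
            I2_pi (fun _ => q) (fun _ => hs) (fun _ c => cXY c) (fun _ c => cU c)
        _ = (n : ℝ) * I2 q cXY cU := by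
            rw [Finset.sum_const, Finset.card_univ, Fintype.card_fin, nsmul_eq_mul]
    rw [Set.mem_smul_set]
    refine ⟨(I2 (fun a => Qn (EPi n a)) cX cU, I2 (fun a => Qn (EPi n a)) cY cU,
        I2 (fun a => Qn (EPi n a)) cXY cU),
      ⟨Fin n → U, inferInstance, fun a => Qn (EPi n a), ⟨⟨?_, ?_⟩, ?_⟩, rfl⟩, ?_⟩
    · intro a
      exact Finset.prod_nonneg fun i _ => hnn _
    · calc ∑ a, Qn (EPi n a) = ∑ b, Qn b := Equiv.sum_comp (EPi n) Qn
        _ = ∏ _i : Fin n, ∑ c : X × Y × U, q c := (Fintype.prod_sum fun _ c => q c).symm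
        _ = 1 := by simp [hs]
    · intro x y
      calc ∑ u : Fin n → U, Qn (EPi n (x, y, u))
          = ∏ i : Fin n, ∑ c : U, q (x i, y i, c) :=
            (Fintype.prod_sum fun i c => q (x i, y i, c)).symm
        _ = ∏ i, p (x i, y i) := Finset.prod_congr rfl fun i _ => hm (x i) (y i)
    · rw [c1, c2, c3]
      show ((n : ℝ)⁻¹ * ((n : ℝ) * I2 q cX cU), (n : ℝ)⁻¹ * ((n : ℝ) * I2 q cY cU),
        (n : ℝ)⁻¹ * ((n : ℝ) * I2 q cXY cU)) = _
      rw [← mul_assoc, ← mul_assoc, ← mul_assoc, inv_mul_cancel₀ hnne, one_mul, one_mul, one_mul]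

end GW
end
end
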